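/- For nonzero matrices U_1,...,U_l and Û_1,...,Û_l of matching sizes, dist(⊗_{k=1}^l U_k, ⊗_{k=1}^l Û_k) ≤ Σ_{k=1}^l dist(U_k, Û_k), and moreover dist(⊗_{k=1}^l U_k, ⊗_{k=1}^l Û_k) ≥ max_k dist(U_k, Û_k). -/
import Mathlib

open Matrix

/-- dist² via the normalized Frobenius inner product. -/
noncomputable def mDistSq {m n : Type*} [Fintype m] [Fintype n] (A B : Matrix m n ℝ) : ℝ :=
  1 - (∑ i, ∑ j, A i j * B i j) ^ 2 /
    ((∑ i, ∑ j, A i j * A i j) * (∑ i, ∑ j, B i j * B i j))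

/-- dist = sqrt of dist². -/
noncomputable def mDist {m n : Type*} [Fintype m] [Fintype n] (A B : Matrix m n ℝ) : ℝ :=
  Real.sqrt (mDistSq A B)

/-- The l-fold Kronecker product ⊗_{k} A_k, realized as a matrix indexed by the
product of the index sets: its ((i_k)_k, (j_k)_k) entry is Π_k (A_k)_{i_k, j_k}. -/
def kronFold {l : ℕ} {m n : Fin l → Type*} [∀ k, Fintype (m k)] [∀ k, Fintype (n k)]
    (A : ∀ k, Matrix (m k) (n k) ℝ) : Matrix (∀ k, m k) (∀ k, n k) ℝ :=
  fun i j => ∏ k, A k (i k) (j k)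

lemma sqrt_add_le' (x y : ℝ) (hx : 0 ≤ x) (hy : 0 ≤ y) :
    Real.sqrt (x + y) ≤ Real.sqrt x + Real.sqrt y := by
  have h1 := Real.sq_sqrt hx
  have h2 := Real.sq_sqrt hy
  have h3 := Real.sqrt_nonneg x
  have h4 := Real.sqrt_nonneg y
  have : x + y ≤ (Real.sqrt x + Real.sqrt y) ^ 2 := by nlinarith
  calc Real.sqrt (x + y) ≤ Real.sqrt ((Real.sqrt x + Real.sqrt y) ^ 2) :=
        Real.sqrt_le_sqrt this
    _ = Real.sqrt x + Real.sqrt y := Real.sqrt_sq (by positivity)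

lemma sqrt_one_sub_prod_le {ι : Type*} (s : Finset ι) (c : ι → ℝ)
    (h0 : ∀ i ∈ s, 0 ≤ c i) (h1 : ∀ i ∈ s, c i ≤ 1) :
    Real.sqrt (1 - ∏ i ∈ s, c i) ≤ ∑ i ∈ s, Real.sqrt (1 - c i) := by
  classical
  induction s using Finset.induction_on with
  | empty => simp
  | @insert a s ha ih =>
    rw [Finset.prod_insert ha, Finset.sum_insert ha]
    have hP0 : 0 ≤ ∏ i ∈ s, c i :=
      Finset.prod_nonneg fun i hi => h0 i (Finset.mem_insert_of_mem hi)
    have hP1 : ∏ i ∈ s, c i ≤ 1 :=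
      Finset.prod_le_one (fun i hi => h0 i (Finset.mem_insert_of_mem hi))
        (fun i hi => h1 i (Finset.mem_insert_of_mem hi))
    have hca0 : 0 ≤ c a := h0 a (Finset.mem_insert_self a s)
    have hca1 : c a ≤ 1 := h1 a (Finset.mem_insert_self a s)
    have key : 1 - c a * ∏ i ∈ s, c i ≤ (1 - c a) + (1 - ∏ i ∈ s, c i) := by nlinarith
    calc Real.sqrt (1 - c a * ∏ i ∈ s, c i)
        ≤ Real.sqrt ((1 - c a) + (1 - ∏ i ∈ s, c i)) := Real.sqrt_le_sqrt key
      _ ≤ Real.sqrt (1 - c a) + Real.sqrt (1 - ∏ i ∈ s, c i) :=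
          sqrt_add_le' _ _ (by linarith) (by linarith)
      _ ≤ Real.sqrt (1 - c a) + ∑ i ∈ s, Real.sqrt (1 - c i) := by
          have := ih (fun i hi => h0 i (Finset.mem_insert_of_mem hi))
            (fun i hi => h1 i (Finset.mem_insert_of_mem hi))
          linarith

lemma kron_sum {l : ℕ} {m n : Fin l → Type*} [∀ k, Fintype (m k)] [∀ k, Fintype (n k)]
    (f : ∀ k, m k → n k → ℝ) :
    ∑ i : ∀ k, m k, ∑ j : ∀ k, n k, ∏ k, f k (i k) (j k)
      = ∏ k, ∑ a, ∑ b, f k a b := by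
  calc ∑ i : ∀ k, m k, ∑ j : ∀ k, n k, ∏ k, f k (i k) (j k)
      = ∑ i : ∀ k, m k, ∏ k, ∑ b, f k (i k) b := by
        refine Finset.sum_congr rfl fun i _ => ?_
        rw [Finset.prod_univ_sum]
        rw [Fintype.piFinset_univ]
    _ = ∏ k, ∑ a, ∑ b, f k a b := by
        rw [Finset.prod_univ_sum, Fintype.piFinset_univ]

lemma sum_sq_pos {m n : Type*} [Fintype m] [Fintype n] (A : Matrix m n ℝ) (h : A ≠ 0) :
    0 < ∑ i, ∑ j, A i j * A i j := by
  obtain ⟨i, j, hij⟩ : ∃ i j, A i j ≠ 0 := by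
    by_contra hc
    push_neg at hc
    exact h (by ext i j; simpa using hc i j)
  refine Finset.sum_pos' (fun i _ => Finset.sum_nonneg fun j _ => mul_self_nonneg _)
    ⟨i, Finset.mem_univ _, ?_⟩
  exact Finset.sum_pos' (fun j _ => mul_self_nonneg _)
    ⟨j, Finset.mem_univ _, mul_self_pos.2 hij⟩

/-- max_k dist(U_k,Û_k) ≤ dist(⊗U_k, ⊗Û_k) ≤ Σ_k dist(U_k,Û_k). -/
theorem stmt_6 {l : ℕ} {m n : Fin l → Type*} [∀ k, Fintype (m k)] [∀ k, Fintype (n k)]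
    (U Uh : ∀ k, Matrix (m k) (n k) ℝ)
    (hU : ∀ k, U k ≠ 0) (hUh : ∀ k, Uh k ≠ 0) :
    (∀ k, mDist (U k) (Uh k) ≤ mDist (kronFold U) (kronFold Uh)) ∧
      mDist (kronFold U) (kronFold Uh) ≤ ∑ k, mDist (U k) (Uh k) := by
  classical
  set a : Fin l → ℝ := fun k => ∑ i, ∑ j, U k i j * Uh k i j with ha
  set p : Fin l → ℝ := fun k => ∑ i, ∑ j, U k i j * U k i j with hp
  set q : Fin l → ℝ := fun k => ∑ i, ∑ j, Uh k i j * Uh k i j with hq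
  have hppos : ∀ k, 0 < p k := fun k => sum_sq_pos _ (hU k)
  have hqpos : ∀ k, 0 < q k := fun k => sum_sq_pos _ (hUh k)
  set c : Fin l → ℝ := fun k => a k ^ 2 / (p k * q k) with hc
  have hc0 : ∀ k, 0 ≤ c k := fun k =>
    div_nonneg (sq_nonneg _) (le_of_lt (mul_pos (hppos k) (hqpos k)))
  have hCS : ∀ k, a k ^ 2 ≤ p k * q k := by
    intro k
    have h := Finset.sum_mul_sq_le_sq_mul_sq Finset.univ
      (fun ij : m k × n k => U k ij.1 ij.2) (fun ij : m k × n k => Uh k ij.1 ij.2)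
    have e1 : a k = ∑ ij : m k × n k, U k ij.1 ij.2 * Uh k ij.1 ij.2 := by
      rw [Fintype.sum_prod_type]
    have e2 : p k = ∑ ij : m k × n k, (U k ij.1 ij.2) ^ 2 := by
      simp only [sq]; rw [Fintype.sum_prod_type]
    have e3 : q k = ∑ ij : m k × n k, (Uh k ij.1 ij.2) ^ 2 := by
      simp only [sq]; rw [Fintype.sum_prod_type]
    rw [e1, e2, e3]; exact h
  have hc1 : ∀ k, c k ≤ 1 := fun k =>
    div_le_one_of_le₀ (hCS k) (le_of_lt (mul_pos (hppos k) (hqpos k)))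
  -- identify the single-factor distances
  have hdistk : ∀ k, mDist (U k) (Uh k) = Real.sqrt (1 - c k) := by
    intro k; rfl
  -- identify the Kronecker distance
  have hkron : mDist (kronFold U) (kronFold Uh) = Real.sqrt (1 - ∏ k, c k) := by
    unfold mDist mDistSq kronFold
    congr 1
    have e1 : (∑ i : ∀ k, m k, ∑ j : ∀ k, n k,
        (∏ k, U k (i k) (j k)) * ∏ k, Uh k (i k) (j k)) = ∏ k, a k := by
      rw [← kron_sum (fun k x y => U k x y * Uh k x y)]
      simp [Finset.prod_mul_distrib]
    have e2 : (∑ i : ∀ k, m k, ∑ j : ∀ k, n k,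
        (∏ k, U k (i k) (j k)) * ∏ k, U k (i k) (j k)) = ∏ k, p k := by
      rw [← kron_sum (fun k x y => U k x y * U k x y)]
      simp [Finset.prod_mul_distrib]
    have e3 : (∑ i : ∀ k, m k, ∑ j : ∀ k, n k,
        (∏ k, Uh k (i k) (j k)) * ∏ k, Uh k (i k) (j k)) = ∏ k, q k := by
      rw [← kron_sum (fun k x y => Uh k x y * Uh k x y)]
      simp [Finset.prod_mul_distrib]
    rw [e1, e2, e3]
    rw [hc]
    rw [← Finset.prod_pow, ← Finset.prod_mul_distrib, ← Finset.prod_div_distrib]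
  constructor
  · intro k
    rw [hdistk, hkron]
    apply Real.sqrt_le_sqrt
    have : ∏ j, c j ≤ c k := by
      rw [← Finset.mul_prod_erase Finset.univ c (Finset.mem_univ k)]
      have h1 : ∏ j ∈ Finset.univ.erase k, c j ≤ 1 :=
        Finset.prod_le_one (fun i _ => hc0 i) (fun i _ => hc1 i)
      have h2 : 0 ≤ ∏ j ∈ Finset.univ.erase k, c j :=
        Finset.prod_nonneg fun i _ => hc0 i
      nlinarith [hc0 k]
    linarith
  · rw [hkron]
    simp_rw [hdistk]
    exact sqrt_one_sub_prod_le Finset.univ c (fun i _ => hc0 i) (fun i _ => hc1 i)
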